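/- Suppose the embedded jump chain is recurrent. Let f ∈ Dom_+(Γ) be strictly positive with b := sup_{x∈𝕏} f(x) < ∞, and assume that for every a with 0 < a < b the sublevel set {f ≤ a} is finite. Let g : [0,b] → [0,∞) be increasing with B := ∫_0^b (1/g(y)) dy < ∞. If a ∈ (0,b) and Γf(x) ≤ −g(f(x)) for all x ∉ {f ≤ a}, then E_x(τ_{{f ≤ a}}) ≤ B for all x ∉ {f ≤ a}; in particular the chain implodes towards {f ≤ a}. -/

import Mathlib

open MeasureTheory Set Filter
open scoped Classical ENNReal NNReal

/-- A continuous-time Markov chain on a countably infinite state space `X`,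
described by its generator `Γ`, together with a probability space carrying,
for each starting point `x`, the embedded jump chain `jump` and the holding
times `hold` (with `hold n` the holding time at the `n`-th visited state). -/
structure CTMC where
  X : Type
  countX : Countable X
  infX : Infinite X
  Γ : X → X → ℝ
  γ : X → ℝ
  γ_pos : ∀ x, 0 < γ x
  Γ_offdiag_nonneg : ∀ x y, y ≠ x → 0 ≤ Γ x y
  Γ_diag : ∀ x, Γ x x = - γ x
  γ_sum : ∀ x, HasSum (fun y => if y = x then 0 else Γ x y) (γ x)
  /-- irreducibility of the embedded jump chain -/
  irr : ∀ x y : X, ∃ (n : ℕ) (path : ℕ → X), path 0 = x ∧ path n = y ∧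
    ∀ k, k < n → 0 < (if path (k+1) = path k then 0
      else Γ (path k) (path (k+1)) / γ (path k))
  Ω : Type
  measΩ : MeasurableSpace Ω
  μ : X → @Measure Ω measΩ
  probμ : ∀ x, @IsProbabilityMeasure Ω measΩ (μ x)
  jump : ℕ → Ω → X
  hold : ℕ → Ω → ℝ
  jump_meas : ∀ (n : ℕ) (x : X), MeasurableSet[measΩ] {ω | jump n ω = x}
  hold_meas : ∀ n : ℕ, @Measurable Ω ℝ measΩ _ (hold n)
  hold_pos : ∀ n ω, 0 < hold n ω
  /-- under `μ x` the chain starts at `x` -/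
  start : ∀ x : X, μ x {ω | jump 0 ω = x} = 1
  /-- finite-dimensional law: the embedded chain is Markov with transition
  probabilities `P x y = Γ x y / γ x` (for `y ≠ x`), and conditionally on the
  embedded chain the holding times are independent exponentials of rates
  `γ (jump n)` -/
  law : ∀ (x : X) (n : ℕ) (path : ℕ → X) (t : ℕ → ℝ), path 0 = x → (∀ k, 0 ≤ t k) →
    μ x {ω | (∀ k, k ≤ n → jump k ω = path k) ∧ (∀ k, k < n → t k < hold k ω)}
      = ENNReal.ofReal (∏ k ∈ Finset.range n,
          ((if path (k+1) = path k then 0 else Γ (path k) (path (k+1)) / γ (path k))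
            * Real.exp (-(γ (path k)) * t k)))

namespace CTMC

attribute [instance] CTMC.countX CTMC.infX CTMC.measΩ CTMC.probμ

variable (M : CTMC)

/-- embedded chain transition probabilities -/
noncomputable def P (x y : M.X) : ℝ := if y = x then 0 else M.Γ x y / M.γ x

/-- jump times -/
noncomputable def J (n : ℕ) (ω : M.Ω) : ℝ := ∑ k ∈ Finset.range n, M.hold k ω

/-- explosion (life) time -/
noncomputable def zeta (ω : M.Ω) : ℝ≥0∞ := ⨆ n, ENNReal.ofReal (M.J n ω)

/-- the continuous-time chain: `pos t ω = some (jump n ω)` if `J n ≤ t < J (n+1)`,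
and `none` (the cemetery state `∂`) after the explosion time. -/
noncomputable def pos (t : ℝ) (ω : M.Ω) : Option M.X :=
  if h : ∃ n, M.J n ω ≤ t ∧ t < M.J (n+1) ω then some (M.jump h.choose ω) else none

/-- passage time: `τ_A = inf {t ≥ 0 : ξ_t ∈ A}` -/
noncomputable def tau (A : Set M.X) (ω : M.Ω) : ℝ≥0∞ :=
  sInf (ENNReal.ofReal '' {s : ℝ | 0 ≤ s ∧ ∃ a ∈ A, M.pos s ω = some a})

/-- `f` belongs to the domain of the generator -/
def InDom (f : M.X → ℝ) : Prop :=
  ∀ x : M.X, Summable (fun y => if y = x then 0 else M.Γ x y * f y)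

/-- `f ∈ Dom_+(Γ)` -/
def InDomPos (f : M.X → ℝ) : Prop := (∀ x, 0 ≤ f x) ∧ M.InDom f

/-- action of the generator : `Γ f (x) = ∑_y Γ_{xy} f(y)` -/
noncomputable def gen (f : M.X → ℝ) (x : M.X) : ℝ :=
  (∑' y, if y = x then 0 else M.Γ x y * f y) - M.γ x * f x

/-- recurrence of the embedded jump chain -/
def JumpRecurrent : Prop := ∀ x : M.X, M.μ x {ω | ∃ n, 1 ≤ n ∧ M.jump n ω = x} = 1

/-- `f → ∞` : all sublevel sets are finite -/
def FinSublevels (f : M.X → ℝ) : Prop := ∀ r : ℝ, {x : M.X | f x ≤ r}.Finite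

end CTMC

open scoped Topology

namespace CTMCAux

variable (M : CTMC)

lemma P_nonneg (z y : M.X) : 0 ≤ M.P z y := by
  unfold CTMC.P
  split_ifs with h
  · exact le_refl 0
  · exact div_nonneg (M.Γ_offdiag_nonneg z y h) (M.γ_pos z).le

noncomputable def Pn (z y : M.X) : ℝ≥0∞ := ENNReal.ofReal (M.P z y)

lemma hasSum_P (z : M.X) : HasSum (fun y => M.P z y) 1 := by
  have h := (M.γ_sum z).div_const (M.γ z)
  have : (fun y => (if y = z then 0 else M.Γ z y) / M.γ z) = fun y => M.P z y := by
    funext y; unfold CTMC.P; split_ifs <;> simp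
  rw [this] at h
  simpa [div_self (M.γ_pos z).ne'] using h

lemma sum_Pn (z : M.X) : ∑' y, Pn M z y = 1 := by
  unfold Pn
  rw [← ENNReal.ofReal_tsum_of_nonneg (P_nonneg M z) (hasSum_P M z).summable,
    (hasSum_P M z).tsum_eq, ENNReal.ofReal_one]

/-- cylinder set -/
def cyl (m : ℕ) (p : ℕ → M.X) : Set M.Ω := {ω | ∀ k ≤ m, M.jump k ω = p k}

lemma cyl_meas (m : ℕ) (p : ℕ → M.X) : MeasurableSet (cyl M m p) := by
  have : cyl M m p = ⋂ k ∈ Finset.range (m+1), {ω | M.jump k ω = p k} := by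
    ext ω; simp [cyl, Nat.lt_succ_iff]
  rw [this]
  exact MeasurableSet.biInter (Finset.range (m+1)).countable_toSet
    (fun k _ => M.jump_meas k (p k))

noncomputable def Wgt (m : ℕ) (p : ℕ → M.X) : ℝ≥0∞ :=
  ∏ k ∈ Finset.range m, Pn M (p k) (p (k+1))

lemma meas_cyl (x : M.X) (m : ℕ) (p : ℕ → M.X) :
    M.μ x (cyl M m p) = if p 0 = x then Wgt M m p else 0 := by
  split_ifs with h
  · have := M.law x m p (fun _ => 0) h (fun _ => le_refl 0)
    have hset : {ω | (∀ k, k ≤ m → M.jump k ω = p k) ∧ (∀ k, k < m → (0:ℝ) < M.hold k ω)}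
        = cyl M m p := by
      ext ω; simp only [cyl, Set.mem_setOf_eq]
      exact ⟨fun h => h.1, fun h => ⟨h, fun k _ => M.hold_pos k ω⟩⟩
    rw [hset] at this
    rw [this, ENNReal.ofReal_prod_of_nonneg]
    · refine Finset.prod_congr rfl (fun k _ => ?_)
      simp [Pn, CTMC.P, neg_mul]
    · intro k _
      refine mul_nonneg ?_ (Real.exp_pos _).le
      have := P_nonneg M (p k) (p (k+1)); unfold CTMC.P at this; exact this
  · have h0 : M.μ x {ω | M.jump 0 ω ≠ x} = 0 := by
      have := M.start x
      have hc : {ω | M.jump 0 ω ≠ x} = {ω | M.jump 0 ω = x}ᶜ := rfl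
      rw [hc, measure_compl (M.jump_meas 0 x) (measure_ne_top _ _), this, measure_univ]
      simp
    refine measure_mono_null (fun ω hω => ?_) h0
    have := hω 0 (Nat.zero_le m)
    simp only [Set.mem_setOf_eq]
    rw [this]; exact fun hx => h (hx ▸ rfl)

lemma cyl_succ (m : ℕ) (p : ℕ → M.X) (y : M.X) :
    cyl M (m+1) (Function.update p (m+1) y) = cyl M m p ∩ {ω | M.jump (m+1) ω = y} := by
  ext ω
  simp only [cyl, Set.mem_inter_iff, Set.mem_setOf_eq]
  constructor
  · intro h
    refine ⟨fun k hk => ?_, ?_⟩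
    · have := h k (Nat.le_succ_of_le hk)
      rwa [Function.update_of_ne (by omega)] at this
    · have := h (m+1) le_rfl
      rwa [Function.update_self] at this
  · rintro ⟨h1, h2⟩ k hk
    rcases Nat.lt_succ_iff_lt_or_eq.mp (Nat.lt_succ_of_le hk) with hk' | hk'
    · rw [Function.update_of_ne (by omega)]
      exact h1 k (by omega)
    · subst hk'; rwa [Function.update_self]

lemma Wgt_update (m : ℕ) (p : ℕ → M.X) (y : M.X) :
    Wgt M (m+1) (Function.update p (m+1) y) = Wgt M m p * Pn M (p m) y := by
  unfold Wgt
  rw [Finset.prod_range_succ]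
  congr 1
  · refine Finset.prod_congr rfl (fun k hk => ?_)
    rw [Finset.mem_range] at hk
    rw [Function.update_of_ne (by omega), Function.update_of_ne (by omega)]
  · rw [Function.update_of_ne (by omega), Function.update_self]

lemma meas_cyl_hold (x : M.X) (m : ℕ) (p : ℕ → M.X) {t : ℝ} (ht : 0 ≤ t) :
    M.μ x (cyl M m p ∩ {ω | t < M.hold m ω})
      = M.μ x (cyl M m p) * ENNReal.ofReal (Real.exp (-(M.γ (p m)) * t)) := by
  by_cases h0 : p 0 = x
  · have hdec : cyl M m p ∩ {ω | t < M.hold m ω}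
        = ⋃ y : M.X, (cyl M (m+1) (Function.update p (m+1) y) ∩ {ω | t < M.hold m ω}) := by
      ext ω
      simp only [Set.mem_iUnion, Set.mem_inter_iff, Set.mem_setOf_eq, cyl_succ]
      constructor
      · rintro ⟨h1, h2⟩; exact ⟨M.jump (m+1) ω, ⟨h1, rfl⟩, h2⟩
      · rintro ⟨y, ⟨h1, _⟩, h2⟩; exact ⟨h1, h2⟩
    have hterm : ∀ y : M.X,
        M.μ x (cyl M (m+1) (Function.update p (m+1) y) ∩ {ω | t < M.hold m ω})
        = Wgt M m p * ENNReal.ofReal (Real.exp (-(M.γ (p m)) * t)) * Pn M (p m) y := by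
      intro y
      set p' := Function.update p (m+1) y with hp'
      have hp'0 : p' 0 = x := by
        rw [hp', Function.update_of_ne (by omega)]; exact h0
      have hlaw := M.law x (m+1) p' (fun k => if k = m then t else 0) hp'0
        (fun k => by split <;> simp [ht])
      have hset : {ω | (∀ k, k ≤ m+1 → M.jump k ω = p' k) ∧
          (∀ k, k < m+1 → (if k = m then t else 0) < M.hold k ω)}
          = cyl M (m+1) p' ∩ {ω | t < M.hold m ω} := by
        ext ω
        simp only [Set.mem_inter_iff, Set.mem_setOf_eq, cyl]
        constructor
        · rintro ⟨h1, h2⟩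
          exact ⟨h1, by simpa using h2 m (by omega)⟩
        · rintro ⟨h1, h2⟩
          refine ⟨h1, fun k hk => ?_⟩
          split_ifs with hkm
          · subst hkm; exact h2
          · exact M.hold_pos k ω
      rw [hset] at hlaw
      rw [hlaw]
      have hprod : ∏ k ∈ Finset.range (m+1),
          ((if p' (k+1) = p' k then 0 else M.Γ (p' k) (p' (k+1)) / M.γ (p' k))
            * Real.exp (-(M.γ (p' k)) * if k = m then t else 0))
          = (∏ k ∈ Finset.range m, M.P (p k) (p (k+1)))
            * (Real.exp (-(M.γ (p m)) * t) * M.P (p m) y) := by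
        rw [Finset.prod_range_succ]
        congr 1
        · refine Finset.prod_congr rfl (fun k hk => ?_)
          rw [Finset.mem_range] at hk
          have e1 : p' k = p k := Function.update_of_ne (by omega) _ _
          have e2 : p' (k+1) = p (k+1) := Function.update_of_ne (by omega) _ _
          have e3 : k ≠ m := by omega
          rw [e1, e2]
          simp [CTMC.P, e3]
        · have e1 : p' m = p m := Function.update_of_ne (by omega) _ _
          have e2 : p' (m+1) = y := Function.update_self _ _ _
          rw [if_pos rfl, e1, e2]
          simp [CTMC.P, mul_comm]
      rw [hprod, ENNReal.ofReal_mul (Finset.prod_nonneg (fun k _ => P_nonneg M _ _)),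
        ENNReal.ofReal_mul (Real.exp_pos _).le,
        ENNReal.ofReal_prod_of_nonneg (fun k _ => P_nonneg M _ _)]
      simp only [Wgt, Pn]; ring
    have hmeasy : ∀ y : M.X, MeasurableSet
        (cyl M (m+1) (Function.update p (m+1) y) ∩ {ω | t < M.hold m ω}) := by
      intro y
      exact (cyl_meas M _ _).inter (measurableSet_lt measurable_const (M.hold_meas m))
    have hdisj : Pairwise (Function.onFun Disjoint (fun y : M.X =>
        cyl M (m+1) (Function.update p (m+1) y) ∩ {ω | t < M.hold m ω})) := by
      intro y z hyz
      refine Set.disjoint_left.mpr (fun ω hω hω' => hyz ?_)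
      have h1 := hω.1 (m+1) le_rfl
      have h2 := hω'.1 (m+1) le_rfl
      rw [Function.update_self] at h1 h2
      rw [← h1, h2]
    rw [hdec, measure_iUnion hdisj hmeasy]
    calc ∑' y : M.X, M.μ x (cyl M (m+1) (Function.update p (m+1) y) ∩ {ω | t < M.hold m ω})
        = ∑' y : M.X, Wgt M m p * ENNReal.ofReal (Real.exp (-(M.γ (p m)) * t)) * Pn M (p m) y := by
          exact tsum_congr hterm
      _ = Wgt M m p * ENNReal.ofReal (Real.exp (-(M.γ (p m)) * t)) * ∑' y, Pn M (p m) y := by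
          rw [ENNReal.tsum_mul_left]
      _ = M.μ x (cyl M m p) * ENNReal.ofReal (Real.exp (-(M.γ (p m)) * t)) := by
          rw [sum_Pn, mul_one, meas_cyl, if_pos h0]
  · have h1 : M.μ x (cyl M m p) = 0 := by rw [meas_cyl, if_neg h0]
    rw [h1, zero_mul]
    exact measure_mono_null Set.inter_subset_left h1

lemma exp_lintegral {c : ℝ} (hc : 0 < c) :
    ∫⁻ t in Set.Ioi (0:ℝ), ENNReal.ofReal (Real.exp (-c * t)) = ENNReal.ofReal c⁻¹ := by
  rw [← ofReal_integral_eq_lintegral_ofReal (exp_neg_integrableOn_Ioi 0 hc)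
    (Filter.Eventually.of_forall (fun t => (Real.exp_pos _).le))]
  congr 1
  have := MeasureTheory.integral_comp_mul_left_Ioi (fun u => Real.exp (-u)) 0 hc
  simp only [mul_zero, integral_exp_neg_Ioi, neg_zero, Real.exp_zero, smul_eq_mul, mul_one] at this
  rw [← this]
  congr 1 with t
  rw [neg_mul]

def ext {m : ℕ} (q : Fin (m+1) → M.X) : ℕ → M.X :=
  fun k => q ⟨min k m, by omega⟩

lemma ext_eq' {m : ℕ} (q : Fin (m+1) → M.X) (k : ℕ) (hk : k ≤ m) :
    ext M q k = q ⟨k, by omega⟩ := by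
  unfold ext
  congr 1
  ext
  simp only
  omega

lemma ext_eq {m : ℕ} (q : Fin (m+1) → M.X) (k : Fin (m+1)) : ext M q k = q k := by
  rw [ext_eq' M q k (by omega)]

def fiber (m : ℕ) (q : Fin (m+1) → M.X) : Set M.Ω :=
  {ω | ∀ k : Fin (m+1), M.jump k ω = q k}

lemma fiber_eq_cyl (m : ℕ) (q : Fin (m+1) → M.X) : fiber M m q = cyl M m (ext M q) := by
  ext ω
  simp only [fiber, cyl, Set.mem_setOf_eq]
  constructor
  · intro h k hk
    rw [ext_eq' M q k hk]
    exact h ⟨k, by omega⟩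
  · intro h k
    have := h k (by omega)
    rwa [ext_eq] at this

lemma fiber_meas (m : ℕ) (q : Fin (m+1) → M.X) : MeasurableSet (fiber M m q) := by
  rw [fiber_eq_cyl]; exact cyl_meas M m _

lemma fiber_disj (m : ℕ) : Pairwise (Function.onFun Disjoint (fiber M m)) := by
  intro q q' hqq'
  refine Set.disjoint_left.mpr (fun ω hω hω' => hqq' ?_)
  funext k
  rw [← hω k, ← hω' k]

lemma fiber_cover (m : ℕ) : ⋃ q, fiber M m q = Set.univ := by
  ext ω
  simp only [Set.mem_iUnion, Set.mem_univ, iff_true]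
  exact ⟨fun k => M.jump k ω, fun k => rfl⟩

lemma master (x : M.X) (m : ℕ) (φ : (Fin (m+1) → M.X) → ℝ≥0∞) :
    ∫⁻ ω, φ (fun k => M.jump k ω) ∂ M.μ x
      = ∑' q : Fin (m+1) → M.X, φ q * M.μ x (fiber M m q) := by
  letI : MeasurableSpace (Fin (m+1) → M.X) := ⊤
  haveI : MeasurableSingletonClass (Fin (m+1) → M.X) := ⟨fun _ => trivial⟩
  have hV : Measurable (fun ω => (fun k => M.jump k ω : Fin (m+1) → M.X)) := by
    apply measurable_to_countable'
    intro q
    have : (fun ω => (fun k => M.jump k ω : Fin (m+1) → M.X)) ⁻¹' {q} = fiber M m q := by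
      ext ω
      simp only [Set.mem_preimage, Set.mem_singleton_iff, fiber, Set.mem_setOf_eq, funext_iff]
    rw [this]; exact fiber_meas M m q
  rw [← lintegral_map measurable_from_top hV]
  rw [lintegral_countable' φ]
  refine tsum_congr (fun q => ?_)
  congr 1
  rw [Measure.map_apply hV trivial]
  congr 1
  ext ω
  simp only [Set.mem_preimage, Set.mem_singleton_iff, fiber, Set.mem_setOf_eq, funext_iff]

def pfiber (m : ℕ) (q : Fin (m+1) → M.X) (y : M.X) : Set M.Ω :=
  fiber M m q ∩ {ω | M.jump (m+1) ω = y}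

lemma pfiber_meas (m : ℕ) (q : Fin (m+1) → M.X) (y : M.X) :
    MeasurableSet (pfiber M m q y) :=
  (fiber_meas M m q).inter (M.jump_meas (m+1) y)

/-- the (m+2)-step path obtained by appending `y` -/
def ext2 {m : ℕ} (q : Fin (m+1) → M.X) (y : M.X) : ℕ → M.X :=
  fun k => if k ≤ m then ext M q k else y

lemma pfiber_eq_cyl (m : ℕ) (q : Fin (m+1) → M.X) (y : M.X) :
    pfiber M m q y = cyl M (m+1) (ext2 M q y) := by
  have : cyl M (m+1) (ext2 M q y) = cyl M m (ext2 M q y) ∩ {ω | M.jump (m+1) ω = y} := by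
    ext ω
    simp only [cyl, Set.mem_inter_iff, Set.mem_setOf_eq]
    constructor
    · intro h
      refine ⟨fun k hk => h k (by omega), ?_⟩
      have := h (m+1) le_rfl
      rwa [ext2, if_neg (by omega)] at this
    · rintro ⟨h1, h2⟩ k hk
      rcases Nat.lt_or_ge k (m+1) with hk' | hk'
      · exact h1 k (by omega)
      · have : k = m+1 := by omega
        subst this
        rw [ext2, if_neg (by omega)]
        exact h2
  rw [this]
  have : cyl M m (ext2 M q y) = cyl M m (ext M q) := by
    ext ω
    simp only [cyl, Set.mem_setOf_eq]
    constructor <;> intro h k hk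
    · have := h k hk; rwa [ext2, if_pos hk] at this
    · rw [ext2, if_pos hk]; exact h k hk
  rw [this, pfiber, fiber_eq_cyl]

lemma meas_pfiber (x : M.X) (m : ℕ) (q : Fin (m+1) → M.X) (y : M.X) :
    M.μ x (pfiber M m q y) = M.μ x (fiber M m q) * Pn M (q (Fin.last m)) y := by
  rw [pfiber_eq_cyl, fiber_eq_cyl, meas_cyl, meas_cyl]
  have h0 : ext2 M q y 0 = ext M q 0 := by rw [ext2, if_pos (by omega)]
  have hW : Wgt M (m+1) (ext2 M q y) = Wgt M m (ext M q) * Pn M (q (Fin.last m)) y := by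
    unfold Wgt
    rw [Finset.prod_range_succ]
    congr 1
    · refine Finset.prod_congr rfl (fun k hk => ?_)
      rw [Finset.mem_range] at hk
      rw [ext2, if_pos (by omega), ext2, if_pos (by omega)]
    · rw [ext2, if_pos (by omega), ext2, if_neg (by omega)]
      congr 2
      rw [ext_eq' M q m le_rfl]
      rfl
  rw [h0, hW]
  split_ifs
  · ring
  · rw [zero_mul]

lemma master_pair (x : M.X) (m : ℕ) (φ : (Fin (m+1) → M.X) → M.X → ℝ≥0∞) :
    ∫⁻ ω, φ (fun k => M.jump k ω) (M.jump (m+1) ω) ∂ M.μ x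
      = ∑' q : Fin (m+1) → M.X, ∑' y : M.X, φ q y * M.μ x (pfiber M m q y) := by
  letI : MeasurableSpace ((Fin (m+1) → M.X) × M.X) := ⊤
  haveI : MeasurableSingletonClass ((Fin (m+1) → M.X) × M.X) := ⟨fun _ => trivial⟩
  have hV : Measurable (fun ω => ((fun k => M.jump k ω : Fin (m+1) → M.X), M.jump (m+1) ω)) := by
    apply measurable_to_countable'
    intro qy
    have : (fun ω => ((fun k => M.jump k ω : Fin (m+1) → M.X), M.jump (m+1) ω)) ⁻¹' {qy}
        = pfiber M m qy.1 qy.2 := by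
      ext ω
      simp only [Set.mem_preimage, Set.mem_singleton_iff, pfiber, fiber, Set.mem_inter_iff,
        Set.mem_setOf_eq, Prod.ext_iff, funext_iff]
    rw [this]; exact pfiber_meas M m qy.1 qy.2
  have : ∫⁻ ω, φ (fun k => M.jump k ω) (M.jump (m+1) ω) ∂ M.μ x
      = ∫⁻ z, (fun z : (Fin (m+1) → M.X) × M.X => φ z.1 z.2) z
          ∂ (Measure.map (fun ω => ((fun k => M.jump k ω : Fin (m+1) → M.X), M.jump (m+1) ω)) (M.μ x)) := by
    rw [lintegral_map measurable_from_top hV]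
  rw [this, lintegral_countable']
  rw [← ENNReal.tsum_prod]
  refine tsum_congr (fun qy => ?_)
  congr 1
  rw [Measure.map_apply hV trivial]
  congr 1
  ext ω
  simp only [Set.mem_preimage, Set.mem_singleton_iff, pfiber, fiber, Set.mem_inter_iff,
    Set.mem_setOf_eq, Prod.ext_iff, funext_iff]

lemma lint_fiber_hold (x : M.X) (m : ℕ) (q : Fin (m+1) → M.X) :
    ∫⁻ ω in fiber M m q, ENNReal.ofReal (M.hold m ω) ∂ M.μ x
      = M.μ x (fiber M m q) * (ENNReal.ofReal (M.γ (q (Fin.last m))))⁻¹ := by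
  have hγ := M.γ_pos (q (Fin.last m))
  have hmeas : AEMeasurable (M.hold m) ((M.μ x).restrict (fiber M m q)) :=
    (M.hold_meas m).aemeasurable
  rw [lintegral_eq_lintegral_meas_lt _ (Filter.Eventually.of_forall
    (fun ω => (M.hold_pos m ω).le)) hmeas]
  have hsetmeas : ∀ t : ℝ, MeasurableSet {a | t < M.hold m a} :=
    fun t => measurableSet_lt measurable_const (M.hold_meas m)
  have h1 : ∀ t ∈ Set.Ioi (0:ℝ),
      (M.μ x).restrict (fiber M m q) {a | t < M.hold m a}
        = M.μ x (fiber M m q) * ENNReal.ofReal (Real.exp (-(M.γ (q (Fin.last m))) * t)) := by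
    intro t ht
    rw [Measure.restrict_apply (hsetmeas t), Set.inter_comm, fiber_eq_cyl,
      meas_cyl_hold M x m _ (le_of_lt ht)]
    congr 3
    rw [ext_eq' M q m le_rfl]
    rfl
  rw [setLIntegral_congr_fun measurableSet_Ioi h1]
  have hmexp : Measurable (fun t : ℝ => ENNReal.ofReal (Real.exp (-(M.γ (q (Fin.last m))) * t))) :=
    (Real.measurable_exp.comp (measurable_const.mul measurable_id)).ennreal_ofReal
  rw [lintegral_const_mul _ hmexp, exp_lintegral hγ, ← ENNReal.ofReal_inv_of_pos hγ]

lemma master_hold (x : M.X) (m : ℕ) (φ : (Fin (m+1) → M.X) → ℝ≥0∞) :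
    ∫⁻ ω, φ (fun k => M.jump k ω) * ENNReal.ofReal (M.hold m ω) ∂ M.μ x
      = ∑' q : Fin (m+1) → M.X,
          φ q * (M.μ x (fiber M m q) * (ENNReal.ofReal (M.γ (q (Fin.last m))))⁻¹) := by
  letI : MeasurableSpace (Fin (m+1) → M.X) := ⊤
  haveI : MeasurableSingletonClass (Fin (m+1) → M.X) := ⟨fun _ => trivial⟩
  have hV : Measurable (fun ω => (fun k => M.jump k ω : Fin (m+1) → M.X)) := by
    apply measurable_to_countable'
    intro q
    have : (fun ω => (fun k => M.jump k ω : Fin (m+1) → M.X)) ⁻¹' {q} = fiber M m q := by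
      ext ω
      simp only [Set.mem_preimage, Set.mem_singleton_iff, fiber, Set.mem_setOf_eq, funext_iff]
    rw [this]; exact fiber_meas M m q
  have hF : Measurable (fun ω => φ (fun k => M.jump k ω) * ENNReal.ofReal (M.hold m ω)) :=
    (measurable_from_top.comp hV).mul (M.hold_meas m).ennreal_ofReal
  have hcov := fiber_cover M m
  calc ∫⁻ ω, φ (fun k => M.jump k ω) * ENNReal.ofReal (M.hold m ω) ∂ M.μ x
      = ∫⁻ ω in ⋃ q, fiber M m q, φ (fun k => M.jump k ω) * ENNReal.ofReal (M.hold m ω) ∂ M.μ x := by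
        rw [hcov, setLIntegral_univ]
    _ = ∑' q : Fin (m+1) → M.X, ∫⁻ ω in fiber M m q,
          φ (fun k => M.jump k ω) * ENNReal.ofReal (M.hold m ω) ∂ M.μ x := by
        rw [lintegral_iUnion (fiber_meas M m) (fiber_disj M m)]
    _ = ∑' q : Fin (m+1) → M.X,
          φ q * (M.μ x (fiber M m q) * (ENNReal.ofReal (M.γ (q (Fin.last m))))⁻¹) := by
        refine tsum_congr (fun q => ?_)
        have hcong : ∀ ω ∈ fiber M m q,
            φ (fun k => M.jump k ω) * ENNReal.ofReal (M.hold m ω)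
              = φ q * ENNReal.ofReal (M.hold m ω) := by
          intro ω hω
          congr 1
          exact congrArg φ (funext hω)
        rw [setLIntegral_congr_fun (fiber_meas M m q) hcong,
          lintegral_const_mul _ (M.hold_meas m).ennreal_ofReal, lint_fiber_hold]

lemma meas_cyl_succ (x0 : M.X) (m : ℕ) (p : ℕ → M.X) (y : M.X) :
    M.μ x0 (cyl M (m+1) (Function.update p (m+1) y))
      = M.μ x0 (cyl M m p) * Pn M (p m) y := by
  rw [meas_cyl, meas_cyl, Wgt_update]
  have h0 : Function.update p (m+1) y 0 = p 0 := Function.update_of_ne (by omega) _ _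
  rw [h0]
  split_ifs
  · rfl
  · rw [zero_mul]

/-- probability of avoiding `x` for `l` further steps, as a function of the current state -/
noncomputable def sAvoid (x : M.X) : ℕ → M.X → ℝ≥0∞
  | 0, _ => 1
  | (l+1), z => ∑' y, (if y = x then 0 else Pn M z y * sAvoid x l y)

/-- the event of avoiding `x` at times `m+1, ..., m+l` -/
def NeSet (x : M.X) (m l : ℕ) : Set M.Ω :=
  {ω | ∀ j, 1 ≤ j → j ≤ l → M.jump (m+j) ω ≠ x}

lemma NeSet_meas (x : M.X) (m l : ℕ) : MeasurableSet (NeSet M x m l) := by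
  have : NeSet M x m l = ⋂ j ∈ Finset.Icc 1 l, {ω | M.jump (m+j) ω = x}ᶜ := by
    ext ω; simp [NeSet]
  rw [this]
  exact MeasurableSet.biInter (Finset.Icc 1 l).countable_toSet
    (fun j _ => (M.jump_meas (m+j) x).compl)

lemma NeSet_succ (x : M.X) (m l : ℕ) :
    NeSet M x m (l+1) = {ω | M.jump (m+1) ω ≠ x} ∩ NeSet M x (m+1) l := by
  ext ω
  simp only [NeSet, Set.mem_inter_iff, Set.mem_setOf_eq]
  constructor
  · intro h
    refine ⟨h 1 le_rfl (by omega), fun j hj1 hjl => ?_⟩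
    have := h (j+1) (by omega) (by omega)
    have hee : m + (j+1) = m + 1 + j := by omega
    rwa [hee] at this
  · rintro ⟨h1, h2⟩ j hj1 hjl
    rcases Nat.eq_or_lt_of_le hj1 with hj | hj
    · rw [← hj]; exact h1
    · have := h2 (j-1) (by omega) (by omega)
      have he : m + 1 + (j-1) = m + j := by omega
      rwa [he] at this


lemma claim_avoid (x0 x : M.X) : ∀ (l m : ℕ) (p : ℕ → M.X),
    M.μ x0 (cyl M m p ∩ NeSet M x m l) = M.μ x0 (cyl M m p) * sAvoid M x l (p m) := by
  intro l
  induction l with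
  | zero =>
    intro m p
    have : NeSet M x m 0 = Set.univ := by
      ext ω; simp [NeSet]; omega
    rw [this, Set.inter_univ, sAvoid, mul_one]
  | succ l ih =>
    intro m p
    have hdec : cyl M m p ∩ NeSet M x m (l+1)
        = ⋃ y : M.X, (cyl M (m+1) (Function.update p (m+1) y)
            ∩ ({ω | M.jump (m+1) ω ≠ x} ∩ NeSet M x (m+1) l)) := by
      rw [NeSet_succ]
      ext ω
      simp only [Set.mem_iUnion, Set.mem_inter_iff, Set.mem_setOf_eq, cyl_succ]
      constructor
      · rintro ⟨h1, h2, h3⟩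
        exact ⟨M.jump (m+1) ω, ⟨h1, rfl⟩, h2, h3⟩
      · rintro ⟨y, ⟨h1, _⟩, h2, h3⟩
        exact ⟨h1, h2, h3⟩
    have hterm : ∀ y : M.X,
        M.μ x0 (cyl M (m+1) (Function.update p (m+1) y)
          ∩ ({ω | M.jump (m+1) ω ≠ x} ∩ NeSet M x (m+1) l))
        = M.μ x0 (cyl M m p) * (if y = x then 0 else Pn M (p m) y * sAvoid M x l y) := by
      intro y
      by_cases hy : y = x
      · rw [if_pos hy, mul_zero]
        have hempty : cyl M (m+1) (Function.update p (m+1) y)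
            ∩ ({ω | M.jump (m+1) ω ≠ x} ∩ NeSet M x (m+1) l) = ∅ := by
          ext ω
          simp only [cyl_succ, Set.mem_inter_iff, Set.mem_setOf_eq, Set.mem_empty_iff_false,
            iff_false]
          rintro ⟨⟨_, h2⟩, h3, _⟩
          exact h3 (hy ▸ h2)
        rw [hempty, measure_empty]
      · rw [if_neg hy]
        have habs : cyl M (m+1) (Function.update p (m+1) y)
            ∩ ({ω | M.jump (m+1) ω ≠ x} ∩ NeSet M x (m+1) l)
            = cyl M (m+1) (Function.update p (m+1) y) ∩ NeSet M x (m+1) l := by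
          ext ω
          simp only [Set.mem_inter_iff, Set.mem_setOf_eq, cyl_succ]
          constructor
          · rintro ⟨h1, _, h3⟩; exact ⟨h1, h3⟩
          · rintro ⟨⟨h1, h2⟩, h3⟩
            exact ⟨⟨h1, h2⟩, by rw [h2]; exact hy, h3⟩
        rw [habs, ih (m+1) (Function.update p (m+1) y), meas_cyl_succ,
          Function.update_self, mul_assoc]
    have hdisj : Pairwise (Function.onFun Disjoint (fun y : M.X =>
        cyl M (m+1) (Function.update p (m+1) y)
          ∩ ({ω | M.jump (m+1) ω ≠ x} ∩ NeSet M x (m+1) l))) := by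
      intro y z hyz
      refine Set.disjoint_left.mpr (fun ω hω hω' => hyz ?_)
      have h1 := hω.1 (m+1) le_rfl
      have h2 := hω'.1 (m+1) le_rfl
      rw [Function.update_self] at h1 h2
      rw [← h1, h2]
    have hmeasy : ∀ y : M.X, MeasurableSet
        (cyl M (m+1) (Function.update p (m+1) y)
          ∩ ({ω | M.jump (m+1) ω ≠ x} ∩ NeSet M x (m+1) l)) := by
      intro y
      exact (cyl_meas M _ _).inter (((M.jump_meas (m+1) x).compl).inter (NeSet_meas M x (m+1) l))
    rw [hdec, measure_iUnion hdisj hmeasy]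
    calc (∑' y, M.μ x0 (cyl M (m+1) (Function.update p (m+1) y)
            ∩ ({ω | M.jump (m+1) ω ≠ x} ∩ NeSet M x (m+1) l)))
        = ∑' y, M.μ x0 (cyl M m p) * (if y = x then 0 else Pn M (p m) y * sAvoid M x l y) :=
          tsum_congr hterm
      _ = M.μ x0 (cyl M m p) * sAvoid M x (l+1) (p m) := by
          rw [ENNReal.tsum_mul_left]; rfl

lemma sAvoid_tendsto (x : M.X) (hrec : M.μ x {ω | ∃ n, 1 ≤ n ∧ M.jump n ω = x} = 1) :
    Tendsto (fun l => sAvoid M x l x) atTop (𝓝 0) := by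
  set p : ℕ → M.X := fun _ => x with hp
  have hcyl0 : cyl M 0 p = {ω | M.jump 0 ω = x} := by
    ext ω; simp [cyl, hp]
  have hcylmeas : M.μ x (cyl M 0 p) = 1 := by rw [hcyl0]; exact M.start x
  have hkey : ∀ l, M.μ x (cyl M 0 p ∩ NeSet M x 0 l) = sAvoid M x l x := by
    intro l
    rw [claim_avoid, hcylmeas, one_mul]
  have hmono : Antitone (fun l => cyl M 0 p ∩ NeSet M x 0 l) := by
    intro l1 l2 h
    refine Set.inter_subset_inter_right _ (fun ω hω j hj1 hj2 => hω j hj1 (hj2.trans h))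
  have hint : ⋂ l, (cyl M 0 p ∩ NeSet M x 0 l) ⊆ {ω | ∃ n, 1 ≤ n ∧ M.jump n ω = x}ᶜ := by
    intro ω hω
    simp only [Set.mem_compl_iff, Set.mem_setOf_eq, not_exists, not_and]
    intro n hn
    have := (Set.mem_iInter.mp hω n).2 n hn le_rfl
    rwa [zero_add] at this
  have hnull : M.μ x (⋂ l, (cyl M 0 p ∩ NeSet M x 0 l)) = 0 := by
    refine measure_mono_null hint ?_
    have hm : MeasurableSet {ω | ∃ n, 1 ≤ n ∧ M.jump n ω = x} := by
      have : {ω | ∃ n, 1 ≤ n ∧ M.jump n ω = x} = ⋃ n ∈ {n : ℕ | 1 ≤ n}, {ω | M.jump n ω = x} := by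
        ext ω; simp
      rw [this]
      exact MeasurableSet.biUnion (Set.to_countable _) (fun n _ => M.jump_meas n x)
    rw [measure_compl hm (measure_ne_top _ _), hrec, measure_univ]
    simp
  have htend := tendsto_measure_iInter_atTop
    (fun l => ((cyl_meas M 0 p).inter (NeSet_meas M x 0 l)).nullMeasurableSet)
    hmono ⟨0, measure_ne_top (M.μ x) _⟩
  rw [hnull] at htend
  have : (⇑(M.μ x) ∘ fun l => cyl M 0 p ∩ NeSet M x 0 l) = fun l => sAvoid M x l x := by
    funext l
    exact hkey l
  rwa [this] at htend

/-- almost surely, the chain started at `x` returns to `x` infinitely often -/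
lemma visits_infinite (x : M.X) (hrec : M.μ x {ω | ∃ n, 1 ≤ n ∧ M.jump n ω = x} = 1) :
    M.μ x {ω | ¬ Set.Infinite {n : ℕ | 1 ≤ n ∧ M.jump n ω = x}} = 0 := by
  have hRetc : M.μ x {ω | ∀ n, 1 ≤ n → M.jump n ω ≠ x} = 0 := by
    have hm : MeasurableSet {ω | ∃ n, 1 ≤ n ∧ M.jump n ω = x} := by
      have : {ω | ∃ n, 1 ≤ n ∧ M.jump n ω = x} = ⋃ n ∈ {n : ℕ | 1 ≤ n}, {ω | M.jump n ω = x} := by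
        ext ω; simp
      rw [this]
      exact MeasurableSet.biUnion (Set.to_countable _) (fun n _ => M.jump_meas n x)
    have : {ω | ∀ n, 1 ≤ n → M.jump n ω ≠ x} = {ω | ∃ n, 1 ≤ n ∧ M.jump n ω = x}ᶜ := by
      ext ω; simp
    rw [this, measure_compl hm (measure_ne_top _ _), hrec, measure_univ]
    simp
  -- the "last visit at time m" events are null
  have hG : ∀ m : ℕ, M.μ x ({ω | M.jump m ω = x} ∩ {ω | ∀ n, n > m → M.jump n ω ≠ x}) = 0 := by
    intro m
    have hdec : {ω | M.jump m ω = x} ∩ {ω | ∀ n, n > m → M.jump n ω ≠ x}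
        = ⋃ q : Fin (m+1) → M.X,
            (fiber M m q ∩ ({ω | M.jump m ω = x} ∩ {ω | ∀ n, n > m → M.jump n ω ≠ x})) := by
      rw [← Set.iUnion_inter, fiber_cover, Set.univ_inter]
    rw [hdec]
    refine measure_iUnion_null (fun q => ?_)
    by_cases hq : q (Fin.last m) = x
    · -- bound by cylinder ∩ NeSet for every l
      have hb : ∀ l : ℕ, M.μ x (fiber M m q ∩ ({ω | M.jump m ω = x}
          ∩ {ω | ∀ n, n > m → M.jump n ω ≠ x})) ≤ sAvoid M x l x := by
        intro l
        have hsub : fiber M m q ∩ ({ω | M.jump m ω = x} ∩ {ω | ∀ n, n > m → M.jump n ω ≠ x})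
            ⊆ cyl M m (ext M q) ∩ NeSet M x m l := by
          rintro ω ⟨h1, _, h3⟩
          rw [fiber_eq_cyl] at h1
          exact ⟨h1, fun j hj1 hjl => h3 (m+j) (by omega)⟩
        refine (measure_mono hsub).trans ?_
        rw [claim_avoid]
        have : ext M q m = x := by rw [ext_eq' M q m le_rfl]; exact hq
        rw [this]
        exact mul_le_of_le_one_left zero_le prob_le_one
      exact le_antisymm (ge_of_tendsto' (sAvoid_tendsto M x hrec) hb) zero_le
    · refine measure_mono_null (fun ω hω => (hq ?_).elim) measure_empty
      exact ((hω.1 (Fin.last m)).symm.trans hω.2.1)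
  -- assemble
  have hsub : {ω | ¬ Set.Infinite {n : ℕ | 1 ≤ n ∧ M.jump n ω = x}}
      ⊆ {ω | ∀ n, 1 ≤ n → M.jump n ω ≠ x}
        ∪ ⋃ m : ℕ, ({ω | M.jump m ω = x} ∩ {ω | ∀ n, n > m → M.jump n ω ≠ x}) := by
    intro ω hω
    simp only [Set.mem_setOf_eq, Set.not_infinite] at hω
    by_cases hne : {n : ℕ | 1 ≤ n ∧ M.jump n ω = x}.Nonempty
    · obtain ⟨m, hm, hmax⟩ := Set.Finite.exists_maximalFor id _ hω hne
      right
      refine Set.mem_iUnion.mpr ⟨m, hm.2, fun n hn hjn => ?_⟩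
      have : n ∈ {n : ℕ | 1 ≤ n ∧ M.jump n ω = x} := ⟨by omega, hjn⟩
      have := hmax this (le_of_lt hn)
      simp only [id_eq] at this
      omega
    · left
      intro n hn hjn
      exact hne ⟨n, hn, hjn⟩
  refine measure_mono_null hsub ?_
  exact measure_union_null hRetc (measure_iUnion_null hG)


lemma J_nonneg (ω : M.Ω) (n : ℕ) : 0 ≤ M.J n ω :=
  Finset.sum_nonneg (fun k _ => (M.hold_pos k ω).le)

lemma J_lt_succ (ω : M.Ω) (n : ℕ) : M.J n ω < M.J (n+1) ω := by
  unfold CTMC.J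
  rw [Finset.sum_range_succ]
  exact lt_add_of_pos_right _ (M.hold_pos n ω)

lemma J_mono (ω : M.Ω) : StrictMono (fun n => M.J n ω) :=
  strictMono_nat_of_lt_succ (J_lt_succ M ω)

lemma pos_J (ω : M.Ω) (n : ℕ) : M.pos (M.J n ω) ω = some (M.jump n ω) := by
  have hex : ∃ k, M.J k ω ≤ M.J n ω ∧ M.J n ω < M.J (k+1) ω :=
    ⟨n, le_rfl, J_lt_succ M ω n⟩
  rw [CTMC.pos, dif_pos hex]
  congr 1
  have hspec := hex.choose_spec
  set c := hex.choose with hc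
  by_contra hne
  rcases Nat.lt_or_ge c n with hcn | hcn
  · have : M.J (c+1) ω ≤ M.J n ω := (J_mono M ω).le_iff_le.mpr (by omega)
    exact absurd hspec.2 (not_lt.mpr this)
  · have hcn' : n < c := by
      rcases Nat.eq_or_lt_of_le hcn with h | h
      · exact absurd (congrArg (fun m => M.jump m ω) h.symm) hne
      · exact h
    have : M.J (n+1) ω ≤ M.J c ω := (J_mono M ω).le_iff_le.mpr (by omega)
    have h2 : M.J n ω < M.J c ω := lt_of_lt_of_le (J_lt_succ M ω n) this
    exact absurd hspec.1 (not_le.mpr h2)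

lemma tau_le_J (A : Set M.X) (ω : M.Ω) (n : ℕ) (hn : M.jump n ω ∈ A) :
    M.tau A ω ≤ ENNReal.ofReal (M.J n ω) := by
  apply sInf_le
  refine ⟨M.J n ω, ⟨J_nonneg M ω n, M.jump n ω, hn, pos_J M ω n⟩, rfl⟩


lemma key_lemma (f : M.X → ℝ) (hdom : M.InDom f) (hfpos : ∀ y, 0 < f y)
    (g : ℝ → ℝ) (b : ℝ) (hfb : ∀ y, f y ≤ b)
    (hgmono : MonotoneOn g (Set.Icc 0 b))
    (C : ℝ≥0∞) (hC : C ≠ ⊤)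
    (hhC : ∀ y : M.X, (∫⁻ t in Set.Ioc (0:ℝ) (f y), (ENNReal.ofReal (g t))⁻¹) ≤ C)
    (z : M.X) (hc : 0 < g (f z)) (hgen : M.gen f z ≤ - g (f z)) :
    (∑' y, Pn M z y * ∫⁻ t in Set.Ioc (0:ℝ) (f y), (ENNReal.ofReal (g t))⁻¹)
        + (ENNReal.ofReal (M.γ z))⁻¹
      ≤ ∫⁻ t in Set.Ioc (0:ℝ) (f z), (ENNReal.ofReal (g t))⁻¹ := by
  set h : M.X → ℝ≥0∞ := fun y => ∫⁻ t in Set.Ioc (0:ℝ) (f y), (ENNReal.ofReal (g t))⁻¹ with hh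
  set c : ℝ := g (f z) with hcdef
  have hγ := M.γ_pos z
  have hfin : ∀ y, h y ≠ ⊤ := fun y => ne_top_of_le_ne_top hC (hhC y)
  set hr : M.X → ℝ := fun y => (h y).toReal with hhr
  have hrnn : ∀ y, 0 ≤ hr y := fun y => ENNReal.toReal_nonneg
  have hmemz : f z ∈ Set.Icc (0:ℝ) b := ⟨(hfpos z).le, hfb z⟩
  -- the concavity-type estimate
  have claim1 : ∀ y, hr y ≤ hr z + (f y - f z) / c := by
    intro y
    rcases le_total (f y) (f z) with hyz | hyz
    · -- f y ≤ f z
      have hsplit : h z = h y + ∫⁻ t in Set.Ioc (f y) (f z), (ENNReal.ofReal (g t))⁻¹ := by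
        rw [hh]
        simp only
        rw [← Set.Ioc_union_Ioc_eq_Ioc (hfpos y).le hyz,
          lintegral_union measurableSet_Ioc (Set.Ioc_disjoint_Ioc_of_le le_rfl)]
      set D := ∫⁻ t in Set.Ioc (f y) (f z), (ENNReal.ofReal (g t))⁻¹ with hD
      have hDfin : D ≠ ⊤ := by
        intro htop
        exact hfin z (by rw [hsplit, htop, add_top])
      have hDge : ENNReal.ofReal ((f z - f y) / c) ≤ D := by
        have hpt : ∀ t ∈ Set.Ioc (f y) (f z), (ENNReal.ofReal c)⁻¹ ≤ (ENNReal.ofReal (g t))⁻¹ := by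
          intro t ht
          have hmemt : t ∈ Set.Icc (0:ℝ) b := ⟨((hfpos y).trans ht.1).le, ht.2.trans (hfb z)⟩
          have : g t ≤ c := hgmono hmemt hmemz ht.2
          exact ENNReal.inv_le_inv' (ENNReal.ofReal_le_ofReal this)
        calc ENNReal.ofReal ((f z - f y) / c)
            = (ENNReal.ofReal c)⁻¹ * ENNReal.ofReal (f z - f y) := by
              rw [ENNReal.ofReal_div_of_pos hc, ENNReal.div_eq_inv_mul]
          _ = ∫⁻ _ in Set.Ioc (f y) (f z), (ENNReal.ofReal c)⁻¹ := by
              rw [setLIntegral_const, Real.volume_Ioc]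
          _ ≤ D := by
              rw [hD]
              refine lintegral_mono_ae ?_
              exact (ae_restrict_iff' measurableSet_Ioc).mpr (Filter.Eventually.of_forall hpt)
      have htr : hr z = hr y + D.toReal := by
        rw [hhr]
        simp only
        rw [hsplit, ENNReal.toReal_add (hfin y) hDfin]
      have hDtr : (f z - f y) / c ≤ D.toReal := by
        have := ENNReal.toReal_mono hDfin hDge
        rwa [ENNReal.toReal_ofReal (div_nonneg (by linarith) hc.le)] at this
      have : (f y - f z) / c = -((f z - f y) / c) := by ring
      rw [this]
      linarith
    · -- f z ≤ f y
      have hsplit : h y = h z + ∫⁻ t in Set.Ioc (f z) (f y), (ENNReal.ofReal (g t))⁻¹ := by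
        rw [hh]
        simp only
        rw [← Set.Ioc_union_Ioc_eq_Ioc (hfpos z).le hyz,
          lintegral_union measurableSet_Ioc (Set.Ioc_disjoint_Ioc_of_le le_rfl)]
      set D := ∫⁻ t in Set.Ioc (f z) (f y), (ENNReal.ofReal (g t))⁻¹ with hD
      have hDfin : D ≠ ⊤ := by
        intro htop
        exact hfin y (by rw [hsplit, htop, add_top])
      have hDle : D ≤ ENNReal.ofReal ((f y - f z) / c) := by
        have hpt : ∀ t ∈ Set.Ioc (f z) (f y), (ENNReal.ofReal (g t))⁻¹ ≤ (ENNReal.ofReal c)⁻¹ := by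
          intro t ht
          have hmemt : t ∈ Set.Icc (0:ℝ) b := ⟨((hfpos z).trans ht.1).le, ht.2.trans (hfb y)⟩
          have : c ≤ g t := hgmono hmemz hmemt ht.1.le
          exact ENNReal.inv_le_inv' (ENNReal.ofReal_le_ofReal this)
        calc D ≤ ∫⁻ _ in Set.Ioc (f z) (f y), (ENNReal.ofReal c)⁻¹ := by
              rw [hD]
              refine lintegral_mono_ae ?_
              exact (ae_restrict_iff' measurableSet_Ioc).mpr (Filter.Eventually.of_forall hpt)
          _ = ENNReal.ofReal ((f y - f z) / c) := by
              rw [setLIntegral_const, Real.volume_Ioc, ENNReal.ofReal_div_of_pos hc,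
                ENNReal.div_eq_inv_mul, mul_comm]
      have htr : hr y = hr z + D.toReal := by
        rw [hhr]
        simp only
        rw [hsplit, ENNReal.toReal_add (hfin z) hDfin]
      have hDtr : D.toReal ≤ (f y - f z) / c := by
        have := ENNReal.toReal_mono ENNReal.ofReal_ne_top hDle
        rwa [ENNReal.toReal_ofReal (div_nonneg (by linarith) hc.le)] at this
      linarith
  -- summability facts
  have hPsum := hasSum_P M z
  have hrbd : ∀ y, hr y ≤ C.toReal := fun y => ENNReal.toReal_mono hC (hhC y)
  have hsum1 : Summable (fun y => M.P z y * hr y) := by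
    refine Summable.of_nonneg_of_le (fun y => mul_nonneg (P_nonneg M z y) (hrnn y))
      (fun y => mul_le_mul_of_nonneg_left (hrbd y) (P_nonneg M z y))
      (hPsum.summable.mul_right C.toReal)
  have hsum2 : Summable (fun y => M.P z y * f y) := by
    have heq : (fun y => M.P z y * f y)
        = fun y => (if y = z then 0 else M.Γ z y * f y) * (M.γ z)⁻¹ := by
      funext y
      by_cases hy : y = z
      · simp [CTMC.P, hy]
      · simp only [CTMC.P, if_neg hy]
        field_simp
    rw [heq]
    exact (hdom z).mul_right _
  have hsum3 : Summable (fun y => M.P z y * ((f y - f z) / c)) := by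
    have heq : (fun y => M.P z y * ((f y - f z) / c))
        = fun y => (M.P z y * f y) * c⁻¹ - M.P z y * (f z / c) := by
      funext y; field_simp
    rw [heq]
    exact (hsum2.mul_right _).sub (hPsum.summable.mul_right _)
  have hsumR : Summable (fun y => M.P z y * (hr z + (f y - f z) / c)) := by
    have heq : (fun y => M.P z y * (hr z + (f y - f z) / c))
        = fun y => M.P z y * hr z + M.P z y * ((f y - f z) / c) := by
      funext y; ring
    rw [heq]
    exact (hPsum.summable.mul_right _).add hsum3
  -- the drift gives the bound on the mean of f
  have hS : (∑' y, M.P z y * f y) ≤ f z - c / M.γ z := by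
    have hT : (∑' y, if y = z then 0 else M.Γ z y * f y) ≤ M.γ z * f z - c := by
      have := M.gen f z
      have hgen' : (∑' y, if y = z then 0 else M.Γ z y * f y) - M.γ z * f z ≤ -c := hgen
      linarith
    have heq : (fun y => M.P z y * f y)
        = fun y => (if y = z then 0 else M.Γ z y * f y) * (M.γ z)⁻¹ := by
      funext y
      by_cases hy : y = z
      · simp [CTMC.P, hy]
      · simp only [CTMC.P, if_neg hy]
        field_simp
    rw [heq, tsum_mul_right]
    rw [div_eq_mul_inv c]
    have hnn : 0 ≤ (M.γ z)⁻¹ := by positivity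
    calc (∑' y, if y = z then 0 else M.Γ z y * f y) * (M.γ z)⁻¹
        ≤ (M.γ z * f z - c) * (M.γ z)⁻¹ := mul_le_mul_of_nonneg_right hT hnn
      _ = f z - c * (M.γ z)⁻¹ := by field_simp
  -- real-valued conclusion
  have hreal : (∑' y, M.P z y * hr y) + (M.γ z)⁻¹ ≤ hr z := by
    have h1 : (∑' y, M.P z y * hr y) ≤ ∑' y, M.P z y * (hr z + (f y - f z) / c) :=
      Summable.tsum_le_tsum (fun y => mul_le_mul_of_nonneg_left (claim1 y) (P_nonneg M z y)) hsum1 hsumR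
    have h2 : (∑' y, M.P z y * (hr z + (f y - f z) / c))
        = hr z + ((∑' y, M.P z y * f y) - f z) / c := by
      have heq : (fun y => M.P z y * (hr z + (f y - f z) / c))
          = fun y => M.P z y * hr z + ((M.P z y * f y) * c⁻¹ - M.P z y * (f z / c)) := by
        funext y; field_simp
      rw [heq, Summable.tsum_add (hPsum.summable.mul_right _)
        ((hsum2.mul_right _).sub (hPsum.summable.mul_right _)),
        tsum_mul_right, hPsum.tsum_eq,
        Summable.tsum_sub (hsum2.mul_right _) (hPsum.summable.mul_right _),
        tsum_mul_right, tsum_mul_right, hPsum.tsum_eq]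
      field_simp
    have h3 : ((∑' y, M.P z y * f y) - f z) / c ≤ -(M.γ z)⁻¹ := by
      have : (∑' y, M.P z y * f y) - f z ≤ -(c / M.γ z) := by linarith
      have h4 : ((∑' y, M.P z y * f y) - f z) / c ≤ (-(c / M.γ z)) / c := by
        gcongr
      have h5 : (-(c / M.γ z)) / c = -(M.γ z)⁻¹ := by
        field_simp
      linarith
    linarith
  -- back to ℝ≥0∞
  have hofr : ∀ y, h y = ENNReal.ofReal (hr y) := fun y =>
    (ENNReal.ofReal_toReal (hfin y)).symm
  calc (∑' y, Pn M z y * h y) + (ENNReal.ofReal (M.γ z))⁻¹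
      = ENNReal.ofReal (∑' y, M.P z y * hr y) + ENNReal.ofReal (M.γ z)⁻¹ := by
        congr 1
        · rw [ENNReal.ofReal_tsum_of_nonneg
            (fun y => mul_nonneg (P_nonneg M z y) (hrnn y)) hsum1]
          refine tsum_congr (fun y => ?_)
          rw [hofr y, Pn, ENNReal.ofReal_mul (P_nonneg M z y)]
        · rw [ENNReal.ofReal_inv_of_pos hγ]
    _ = ENNReal.ofReal ((∑' y, M.P z y * hr y) + (M.γ z)⁻¹) := by
        rw [ENNReal.ofReal_add (tsum_nonneg (fun y => mul_nonneg (P_nonneg M z y) (hrnn y)))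
          (by positivity)]
    _ ≤ ENNReal.ofReal (hr z) := ENNReal.ofReal_le_ofReal hreal
    _ = h z := (hofr z).symm


lemma measurable_comp_V (m : ℕ) (φ : (Fin (m+1) → M.X) → ℝ≥0∞) :
    Measurable (fun ω => φ (fun k => M.jump k ω)) := by
  letI : MeasurableSpace (Fin (m+1) → M.X) := ⊤
  haveI : MeasurableSingletonClass (Fin (m+1) → M.X) := ⟨fun _ => trivial⟩
  have hV : Measurable (fun ω => (fun k => M.jump k ω : Fin (m+1) → M.X)) := by
    apply measurable_to_countable'
    intro q
    have : (fun ω => (fun k => M.jump k ω : Fin (m+1) → M.X)) ⁻¹' {q} = fiber M m q := by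
      ext ω
      simp only [Set.mem_preimage, Set.mem_singleton_iff, fiber, Set.mem_setOf_eq, funext_iff]
    rw [this]; exact fiber_meas M m q
  exact measurable_from_top.comp hV

lemma tsum_fiber_one (x : M.X) (m : ℕ) :
    ∑' q : Fin (m+1) → M.X, M.μ x (fiber M m q) = 1 := by
  rw [← measure_iUnion (fiber_disj M m) (fiber_meas M m), fiber_cover, measure_univ]


lemma forall_fin_succ_nat {α : Type*} (v : ℕ → α) (P : α → Prop) (n : ℕ) :
    (∀ k : Fin (n+2), P (v k)) ↔ (∀ k : Fin (n+1), P (v k)) ∧ P (v (n+1)) := by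
  constructor
  · intro hyp
    refine ⟨fun k => ?_, ?_⟩
    · have := hyp ⟨k.1, by omega⟩
      simpa using this
    · have := hyp ⟨n+1, by omega⟩
      simpa using this
  · rintro ⟨h1, h2⟩ k
    rcases Nat.lt_or_ge k.1 (n+1) with hk | hk
    · have := h1 ⟨k.1, hk⟩
      simpa using this
    · have he : (k:ℕ) = n+1 := by omega
      rw [he]
      exact h2

end CTMCAux

open CTMC in
/-- Proposition (implosion via a modulated drift condition): if `f` is
strictly positive and bounded with finite sublevels below `b = sup f`, `g`
is increasing on `[0,b]` with `B = ∫_0^b dy/g(y) < ∞`, and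
`Γ f(x) ≤ -g(f(x))` outside `{f ≤ a}`, then `E_x τ_{{f ≤ a}} ≤ B` for all
`x ∉ {f ≤ a}`, i.e. the chain implodes towards `{f ≤ a}`. -/
theorem statement9 (M : CTMC) (hrec : M.JumpRecurrent)
    (f : M.X → ℝ) (hf : M.InDomPos f) (hfpos : ∀ x, 0 < f x)
    (hbdd : BddAbove (Set.range f)) (b : ℝ) (hb : b = ⨆ x, f x)
    (hsub : ∀ a' : ℝ, 0 < a' → a' < b → {x : M.X | f x ≤ a'}.Finite)
    (g : ℝ → ℝ) (hgnn : ∀ y ∈ Set.Icc (0:ℝ) b, 0 ≤ g y)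
    (hgmono : MonotoneOn g (Set.Icc (0:ℝ) b))
    (B : ℝ≥0∞) (hB : B = ∫⁻ y in Set.Ioc (0:ℝ) b, (ENNReal.ofReal (g y))⁻¹)
    (hBfin : B < ⊤)
    (a : ℝ) (ha : 0 < a) (hab : a < b)
    (hdrift : ∀ x : M.X, a < f x → M.gen f x ≤ -g (f x)) :
    ∀ x : M.X, a < f x → ∫⁻ ω, M.tau {y | f y ≤ a} ω ∂ M.μ x ≤ B := by
  classical
  intro x hx
  haveI := M.probμ x
  set h : M.X → ℝ≥0∞ := fun y => ∫⁻ t in Set.Ioc (0:ℝ) (f y), (ENNReal.ofReal (g t))⁻¹ with hhdef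
  have hfb : ∀ y, f y ≤ b := fun y => hb ▸ le_ciSup hbdd y
  have hab' : a ≤ b := hab.le
  have hhB : ∀ y, h y ≤ B := by
    intro y
    rw [hB, hhdef]
    exact lintegral_mono_set (Set.Ioc_subset_Ioc_right (hfb y))
  have hga : 0 < g a := by
    by_contra hga
    push_neg at hga
    have hg0 : ∀ t ∈ Set.Ioc (0:ℝ) a, (ENNReal.ofReal (g t))⁻¹ = ⊤ := by
      intro t ht
      have hmt : t ∈ Set.Icc (0:ℝ) b := ⟨ht.1.le, ht.2.trans hab'⟩
      have : g t ≤ 0 := (hgmono hmt ⟨ha.le, hab'⟩ ht.2).trans hga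
      rw [ENNReal.ofReal_of_nonpos this]
      simp
    have hBig : (∫⁻ t in Set.Ioc (0:ℝ) a, (ENNReal.ofReal (g t))⁻¹) = ⊤ := by
      rw [setLIntegral_congr_fun measurableSet_Ioc hg0,
        setLIntegral_const, Real.volume_Ioc]
      rw [ENNReal.top_mul]
      simp only [ne_eq, ENNReal.ofReal_eq_zero, not_le, sub_zero]
      linarith
    have : B = ⊤ := by
      refine top_le_iff.mp ?_
      rw [← hBig, hB]
      exact lintegral_mono_set (Set.Ioc_subset_Ioc_right hab')
    exact absurd this (by simpa using hBfin.ne)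
  have hgz : ∀ z : M.X, a < f z → 0 < g (f z) := fun z hz =>
    lt_of_lt_of_le hga (hgmono ⟨ha.le, hab'⟩ ⟨(hfpos z).le, hfb z⟩ hz.le)
  have hkey : ∀ z : M.X, a < f z →
      (∑' y, CTMCAux.Pn M z y * h y) + (ENNReal.ofReal (M.γ z))⁻¹ ≤ h z := by
    intro z hz
    exact CTMCAux.key_lemma M f hf.2 hfpos g b hfb hgmono B hBfin.ne hhB z (hgz z hz)
      (hdrift z hz)
  -- indicator of "no entry into the target set up to time n"
  set ind : ∀ n : ℕ, (Fin (n+1) → M.X) → ℝ≥0∞ :=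
    fun n q => if ∀ k, a < f (q k) then 1 else 0 with hinddef
  have hind_le_one : ∀ n q, ind n q ≤ 1 := by
    intro n q; rw [hinddef]; dsimp only; split <;> simp
  set u : ℕ → ℝ≥0∞ := fun n => ∑' q : Fin (n+1) → M.X,
    (ind n q * M.μ x (CTMCAux.fiber M n q)) * h (q (Fin.last n)) with hudef
  set e : ℕ → ℝ≥0∞ := fun n => ∑' q : Fin (n+1) → M.X,
    (ind n q * M.μ x (CTMCAux.fiber M n q)) * (ENNReal.ofReal (M.γ (q (Fin.last n))))⁻¹
    with hedef
  -- supermartingale recursion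
  have hrec_ue : ∀ n, u (n+1) + e n ≤ u n := by
    intro n
    have h1 : ∫⁻ ω, ind (n+1) (fun k => M.jump k ω) * h (M.jump (n+1) ω) ∂ M.μ x
        = u (n+1) := by
      calc ∫⁻ ω, ind (n+1) (fun k => M.jump k ω) * h (M.jump (n+1) ω) ∂ M.μ x
          = ∑' q : Fin (n+2) → M.X, (ind (n+1) q * h (q (Fin.last (n+1))))
              * M.μ x (CTMCAux.fiber M (n+1) q) :=
            CTMCAux.master M x (n+1) (fun q => ind (n+1) q * h (q (Fin.last (n+1))))
        _ = u (n+1) := by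
            rw [hudef]
            exact tsum_congr (fun q => by ring)
    have h2 : ∫⁻ ω, ind (n+1) (fun k => M.jump k ω) * h (M.jump (n+1) ω) ∂ M.μ x
        = ∑' (q : Fin (n+1) → M.X), ∑' (y : M.X),
            ((ind n q * (if a < f y then 1 else 0)) * h y) * M.μ x (CTMCAux.pfiber M n q y) := by
      have hpt : ∀ ω, ind (n+1) (fun k => M.jump k ω) * h (M.jump (n+1) ω)
          = ((ind n (fun k => M.jump k ω) * (if a < f (M.jump (n+1) ω) then 1 else 0))
              * h (M.jump (n+1) ω)) := by
        intro ω
        rw [hinddef]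
        simp only
        by_cases hall : ∀ k : Fin (n+2), a < f (M.jump k ω)
        · obtain ⟨hA, hB⟩ := (CTMCAux.forall_fin_succ_nat (fun k => M.jump k ω)
            (fun z => a < f z) n).mp hall
          rw [if_pos hall, if_pos hA, if_pos hB]
          ring
        · rw [if_neg hall]
          by_cases hA : ∀ k : Fin (n+1), a < f (M.jump k ω)
          · have hB : ¬ a < f (M.jump (n+1) ω) := fun hB =>
              hall ((CTMCAux.forall_fin_succ_nat (fun k => M.jump k ω)
                (fun z => a < f z) n).mpr ⟨hA, hB⟩)
            rw [if_pos hA, if_neg hB]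
            simp
          · rw [if_neg hA]
            simp
      rw [lintegral_congr hpt]
      exact CTMCAux.master_pair M x n (fun q y => (ind n q * (if a < f y then 1 else 0)) * h y)
    have h3 : (∑' (q : Fin (n+1) → M.X), ∑' (y : M.X),
            ((ind n q * (if a < f y then 1 else 0)) * h y) * M.μ x (CTMCAux.pfiber M n q y))
        = ∑' q : Fin (n+1) → M.X, (ind n q * M.μ x (CTMCAux.fiber M n q))
            * (∑' y, CTMCAux.Pn M (q (Fin.last n)) y * ((if a < f y then 1 else 0) * h y)) := by
      refine tsum_congr (fun q => ?_)
      rw [← ENNReal.tsum_mul_left]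
      refine tsum_congr (fun y => ?_)
      rw [CTMCAux.meas_pfiber]
      ring
    have hup : u (n+1) = ∑' q : Fin (n+1) → M.X, (ind n q * M.μ x (CTMCAux.fiber M n q))
        * (∑' y, CTMCAux.Pn M (q (Fin.last n)) y * ((if a < f y then 1 else 0) * h y)) :=
      h1.symm.trans (h2.trans h3)
    have hbound : ∀ q : Fin (n+1) → M.X,
        (ind n q * M.μ x (CTMCAux.fiber M n q))
            * (∑' y, CTMCAux.Pn M (q (Fin.last n)) y * ((if a < f y then 1 else 0) * h y))
          + (ind n q * M.μ x (CTMCAux.fiber M n q))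
            * (ENNReal.ofReal (M.γ (q (Fin.last n))))⁻¹
        ≤ (ind n q * M.μ x (CTMCAux.fiber M n q)) * h (q (Fin.last n)) := by
      intro q
      rw [← mul_add]
      by_cases hq : ∀ k, a < f (q k)
      · refine mul_le_mul' le_rfl ?_
        have hmono : (∑' y, CTMCAux.Pn M (q (Fin.last n)) y * ((if a < f y then 1 else 0) * h y))
            ≤ ∑' y, CTMCAux.Pn M (q (Fin.last n)) y * h y := by
          refine ENNReal.tsum_le_tsum (fun y => ?_)
          refine mul_le_mul' le_rfl ?_
          split_ifs
          · rw [one_mul]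
          · simp
        exact le_trans (add_le_add_left hmono _) (hkey (q (Fin.last n)) (hq (Fin.last n)))
      · have : ind n q = 0 := by rw [hinddef]; exact if_neg hq
        simp [this]
    calc u (n+1) + e n
        = ∑' q : Fin (n+1) → M.X,
            ((ind n q * M.μ x (CTMCAux.fiber M n q))
              * (∑' y, CTMCAux.Pn M (q (Fin.last n)) y * ((if a < f y then 1 else 0) * h y))
            + (ind n q * M.μ x (CTMCAux.fiber M n q))
              * (ENNReal.ofReal (M.γ (q (Fin.last n))))⁻¹) := by
          rw [hup, hedef, ENNReal.tsum_add]
      _ ≤ ∑' q : Fin (n+1) → M.X, (ind n q * M.μ x (CTMCAux.fiber M n q)) * h (q (Fin.last n)) :=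
          ENNReal.tsum_le_tsum hbound
      _ = u n := by rw [hudef]
  have hu0 : u 0 ≤ B := by
    rw [hudef]
    calc (∑' q : Fin 1 → M.X, (ind 0 q * M.μ x (CTMCAux.fiber M 0 q)) * h (q (Fin.last 0)))
        ≤ ∑' q : Fin 1 → M.X, B * M.μ x (CTMCAux.fiber M 0 q) := by
          refine ENNReal.tsum_le_tsum (fun q => ?_)
          calc (ind 0 q * M.μ x (CTMCAux.fiber M 0 q)) * h (q (Fin.last 0))
              ≤ (1 * M.μ x (CTMCAux.fiber M 0 q)) * B :=
                mul_le_mul (mul_le_mul (hind_le_one 0 q) le_rfl zero_le zero_le_one)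
                  (hhB _) zero_le zero_le
            _ = B * M.μ x (CTMCAux.fiber M 0 q) := by rw [one_mul, mul_comm]
      _ = B * ∑' q : Fin 1 → M.X, M.μ x (CTMCAux.fiber M 0 q) := ENNReal.tsum_mul_left
      _ = B := by rw [CTMCAux.tsum_fiber_one, mul_one]
  have hesum : ∑' n, e n ≤ B := by
    have hpartial : ∀ m, u m + ∑ n ∈ Finset.range m, e n ≤ B := by
      intro m
      induction m with
      | zero => simpa using hu0
      | succ m ih =>
        rw [Finset.sum_range_succ]
        calc u (m+1) + (∑ n ∈ Finset.range m, e n + e m)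
            = (u (m+1) + e m) + ∑ n ∈ Finset.range m, e n := by ring
          _ ≤ u m + ∑ n ∈ Finset.range m, e n := add_le_add_left (hrec_ue m) _
          _ ≤ B := ih
    rw [ENNReal.tsum_eq_iSup_sum]
    refine iSup_le (fun s => ?_)
    obtain ⟨m, hm⟩ := s.exists_nat_subset_range
    calc ∑ n ∈ s, e n ≤ ∑ n ∈ Finset.range m, e n :=
          Finset.sum_le_sum_of_subset hm
      _ ≤ u m + ∑ n ∈ Finset.range m, e n := le_add_self
      _ ≤ B := hpartial m
  -- e n as an integral
  have hemaster : ∀ n, ∫⁻ ω, ind n (fun k => M.jump k ω)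
      * (ENNReal.ofReal (M.γ (M.jump n ω)))⁻¹ ∂ M.μ x = e n := by
    intro n
    calc ∫⁻ ω, ind n (fun k => M.jump k ω) * (ENNReal.ofReal (M.γ (M.jump n ω)))⁻¹ ∂ M.μ x
        = ∑' q : Fin (n+1) → M.X, (ind n q * (ENNReal.ofReal (M.γ (q (Fin.last n))))⁻¹)
            * M.μ x (CTMCAux.fiber M n q) :=
          CTMCAux.master M x n (fun q => ind n q * (ENNReal.ofReal (M.γ (q (Fin.last n))))⁻¹)
      _ = e n := by
          rw [hedef]
          exact tsum_congr (fun q => by ring)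
  set Good : Set M.Ω := {ω | ∃ n, f (M.jump n ω) ≤ a} with hGood
  have hGoodc : M.μ x Goodᶜ = 0 := by
    set S : ℕ → Set M.Ω := fun n => {ω | M.jump n ω = x} ∩ Goodᶜ with hS
    have hsetm : ∀ n : ℕ, MeasurableSet {ω | f (M.jump n ω) ≤ a} := by
      intro n
      have : {ω | f (M.jump n ω) ≤ a} = ⋃ y ∈ {y : M.X | f y ≤ a}, {ω | M.jump n ω = y} := by
        ext ω
        simp only [Set.mem_setOf_eq, Set.mem_iUnion]
        constructor
        · intro hle
          exact ⟨M.jump n ω, hle, rfl⟩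
        · rintro ⟨y, hy, hjy⟩
          rw [hjy]; exact hy
      rw [this]
      exact MeasurableSet.biUnion (Set.to_countable _) (fun y _ => M.jump_meas n y)
    have hGoodm : MeasurableSet Goodᶜ := by
      have : Good = ⋃ n, {ω | f (M.jump n ω) ≤ a} := by
        ext ω; simp [hGood]
      rw [this]
      exact (MeasurableSet.iUnion (fun n => hsetm n)).compl
    have hSmeas : ∀ n, MeasurableSet (S n) := fun n => (M.jump_meas n x).inter hGoodm
    have hSbound : ∀ n, M.μ x (S n) ≤ ENNReal.ofReal (M.γ x) * e n := by
      intro n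
      have hγx := M.γ_pos x
      have hint : (ENNReal.ofReal (M.γ x))⁻¹ * M.μ x (S n)
          ≤ ∫⁻ ω, ind n (fun k => M.jump k ω)
              * (ENNReal.ofReal (M.γ (M.jump n ω)))⁻¹ ∂ M.μ x := by
        have hcong : ∀ ω ∈ S n, (ENNReal.ofReal (M.γ x))⁻¹
            = ind n (fun k => M.jump k ω) * (ENNReal.ofReal (M.γ (M.jump n ω)))⁻¹ := by
          rintro ω ⟨hωx, hωg⟩
          have hind1 : ind n (fun k : Fin (n+1) => M.jump k ω) = 1 := by
            rw [hinddef]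
            refine if_pos (fun k => ?_)
            by_contra hcon
            exact hωg ⟨(k:ℕ), le_of_not_gt hcon⟩
          rw [hind1, one_mul, Set.mem_setOf_eq.mp hωx]
        calc (ENNReal.ofReal (M.γ x))⁻¹ * M.μ x (S n)
            = ∫⁻ _ in S n, (ENNReal.ofReal (M.γ x))⁻¹ ∂ M.μ x := (setLIntegral_const _ _).symm
          _ = ∫⁻ ω in S n, ind n (fun k => M.jump k ω)
                * (ENNReal.ofReal (M.γ (M.jump n ω)))⁻¹ ∂ M.μ x :=
              setLIntegral_congr_fun (hSmeas n) hcong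
          _ ≤ _ := setLIntegral_le_lintegral _ _
      calc M.μ x (S n) = ENNReal.ofReal (M.γ x) * ((ENNReal.ofReal (M.γ x))⁻¹ * M.μ x (S n)) := by
            rw [← mul_assoc, ENNReal.mul_inv_cancel (by simp [hγx]) ENNReal.ofReal_ne_top,
              one_mul]
        _ ≤ ENNReal.ofReal (M.γ x) * e n :=
            mul_le_mul' le_rfl (le_of_le_of_eq hint (hemaster n))
    have hSsum : ∑' n, M.μ x (S n) ≠ ⊤ := by
      have hle : ∑' n, M.μ x (S n) ≤ ENNReal.ofReal (M.γ x) * B := by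
        calc ∑' n, M.μ x (S n) ≤ ∑' n, ENNReal.ofReal (M.γ x) * e n :=
              ENNReal.tsum_le_tsum hSbound
          _ = ENNReal.ofReal (M.γ x) * ∑' n, e n := ENNReal.tsum_mul_left
          _ ≤ ENNReal.ofReal (M.γ x) * B := mul_le_mul' le_rfl hesum
      exact ne_top_of_le_ne_top (ENNReal.mul_ne_top ENNReal.ofReal_ne_top hBfin.ne) hle
    have hlimsup : M.μ x (Filter.limsup S Filter.atTop) = 0 :=
      MeasureTheory.measure_limsup_atTop_eq_zero hSsum
    have hio := CTMCAux.visits_infinite M x (hrec x)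
    have hsub2 : Goodᶜ ⊆ Filter.limsup S Filter.atTop
        ∪ {ω | ¬ Set.Infinite {n : ℕ | 1 ≤ n ∧ M.jump n ω = x}} := by
      intro ω hω
      by_cases hinf : Set.Infinite {n : ℕ | 1 ≤ n ∧ M.jump n ω = x}
      · left
        rw [Filter.mem_limsup_iff_frequently_mem, Filter.frequently_atTop]
        intro N
        obtain ⟨m, hm, hNm⟩ := hinf.exists_gt N
        exact ⟨m, hNm.le, hm.2, hω⟩
      · right; exact hinf
    exact measure_mono_null hsub2 (measure_union_null hlimsup hio)
  set SB : M.Ω → ℝ≥0∞ :=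
    fun ω => ∑' n, ind n (fun k => M.jump k ω) * ENNReal.ofReal (M.hold n ω) with hSB
  have htaub : ∀ ω ∈ Good, M.tau {y | f y ≤ a} ω ≤ SB ω := by
    intro ω hω
    have hω' : ∃ n, f (M.jump n ω) ≤ a := hω
    obtain ⟨n₀, hn₀, hmin⟩ : ∃ n₀, f (M.jump n₀ ω) ≤ a ∧ ∀ k < n₀, ¬ f (M.jump k ω) ≤ a :=
      ⟨Nat.find hω', Nat.find_spec hω', fun k hk => Nat.find_min hω' hk⟩
    refine le_trans (CTMCAux.tau_le_J M {y | f y ≤ a} ω n₀ hn₀) ?_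
    calc ENNReal.ofReal (M.J n₀ ω)
        = ∑ k ∈ Finset.range n₀, ENNReal.ofReal (M.hold k ω) := by
          rw [CTMC.J, ENNReal.ofReal_sum_of_nonneg (fun k _ => (M.hold_pos k ω).le)]
      _ = ∑ k ∈ Finset.range n₀,
            ind k (fun j => M.jump j ω) * ENNReal.ofReal (M.hold k ω) := by
          refine Finset.sum_congr rfl (fun k hk => ?_)
          rw [Finset.mem_range] at hk
          have hind1 : ind k (fun j : Fin (k+1) => M.jump j ω) = 1 := by
            rw [hinddef]
            refine if_pos (fun j => ?_)
            have hj : (j:ℕ) < n₀ := by have := j.2; omega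
            exact lt_of_not_ge (hmin j hj)
          rw [hind1, one_mul]
      _ ≤ SB ω := by
          rw [hSB]
          exact ENNReal.sum_le_tsum _
  have hintSB : ∫⁻ ω, SB ω ∂ M.μ x = ∑' n, e n := by
    rw [hSB]
    simp only
    rw [lintegral_tsum (f := fun n ω => ind n (fun k => M.jump k ω) * ENNReal.ofReal (M.hold n ω)) (fun n =>
      ((CTMCAux.measurable_comp_V M n (ind n)).mul (M.hold_meas n).ennreal_ofReal).aemeasurable)]
    refine tsum_congr (fun n => ?_)
    calc ∫⁻ ω, ind n (fun k => M.jump k ω) * ENNReal.ofReal (M.hold n ω) ∂ M.μ x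
        = ∑' q : Fin (n+1) → M.X, ind n q * (M.μ x (CTMCAux.fiber M n q)
            * (ENNReal.ofReal (M.γ (q (Fin.last n))))⁻¹) :=
          CTMCAux.master_hold M x n (ind n)
      _ = e n := by
          rw [hedef]
          exact tsum_congr (fun q => by ring)
  calc ∫⁻ ω, M.tau {y | f y ≤ a} ω ∂ M.μ x
      ≤ ∫⁻ ω, SB ω ∂ M.μ x := by
        refine lintegral_mono_ae (ae_iff.mpr (measure_mono_null ?_ hGoodc))
        intro ω hω
        exact fun hg => hω (htaub ω hg)
    _ = ∑' n, e n := hintSB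
    _ ≤ B := hesum
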